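/- Let d be a positive integer, 𝒯 a Krull–Schmidt, Hom-finite, (d+1)-Calabi–Yau triangulated category over an algebraically closed field k, R a basic d-rigid object of 𝒯, and X ∈ pr(R). Then the following are equivalent: (1) X is R[1]-rigid; (2) X is rigid; (3) X is d-rigid. -/

import Mathlib

/-!
Formalization of results from "Relative rigid objects in triangulated categories"
by Fu–Geng–Liu.  Throughout, `C` is a Krull–Schmidt, Hom-finite, `k`-linear
triangulated category over an algebraically closed field `k` (Krull–Schmidt is
encoded as: Hom-finite over `k` together with idempotent completeness), with
suspension functor `⟦1⟧`.
-/

open CategoryTheory Limits Pretriangulated Opposite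

universe w v u

namespace RelRigid

variable {k : Type w} [Field k] [IsAlgClosed k]
variable {C : Type u} [Category.{v} C] [Preadditive C] [CategoryTheory.Linear k C]
  [HasZeroObject C] [HasShift C ℤ] [∀ n : ℤ, (shiftFunctor C n).Additive]
  [Pretriangulated C] [HasFiniteBiproducts C] [IsIdempotentComplete C]
  [∀ X Y : C, Module.Finite k (X ⟶ Y)]

/-- `X` belongs to `add R`: it is a direct summand of a finite direct sum of copies of `R`. -/
def InAdd (R X : C) : Prop :=
  ∃ (n : ℕ) (s : X ⟶ ⨁ (fun _ : Fin n => R)) (p : (⨁ (fun _ : Fin n => R)) ⟶ X),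
    s ≫ p = 𝟙 X

/-- `Y` is a direct summand of `X`. -/
def IsSummand (Y X : C) : Prop := ∃ (s : Y ⟶ X) (p : X ⟶ Y), s ≫ p = 𝟙 Y

/-- The morphism `f` factors through `add Z`. -/
def FactorsThroughAdd (Z : C) {X Y : C} (f : X ⟶ Y) : Prop :=
  ∃ (Z' : C) (_ : InAdd Z Z') (g : X ⟶ Z') (h : Z' ⟶ Y), g ≫ h = f

/-- `X` is rigid: `Hom(X, X[1]) = 0`. -/
def IsRigidObj (X : C) : Prop := ∀ f : X ⟶ X⟦(1 : ℤ)⟧, f = 0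

/-- `X` is `R[1]`-rigid: `R[1](X, X[1]) = 0`, i.e. every morphism `X ⟶ X[1]`
factoring through `add (R[1])` vanishes. -/
def IsRelRigid (R X : C) : Prop :=
  ∀ f : X ⟶ X⟦(1 : ℤ)⟧, FactorsThroughAdd (R⟦(1 : ℤ)⟧) f → f = 0

/-- `X ∈ pr(R)`: there is a triangle `R₁ ⟶ R₀ ⟶ X ⟶ R₁[1]` with `R₀, R₁ ∈ add R`. -/
def InPr (R X : C) : Prop :=
  ∃ (R₁ R₀ : C) (_ : InAdd R R₁) (_ : InAdd R R₀) (f : R₁ ⟶ R₀) (g : R₀ ⟶ X)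
    (h : X ⟶ R₁⟦(1 : ℤ)⟧), Triangle.mk f g h ∈ distTriang C

/-- `X` is maximal `R[1]`-rigid with respect to `pr(R)`: `X ∈ pr(R)` is `R[1]`-rigid and
any `Z ∈ pr(R)` with `R[1](X ⊕ Z, (X ⊕ Z)[1]) = 0` satisfies `Z ∈ add X`. -/
def IsMaxRelRigid (R X : C) : Prop :=
  InPr R X ∧ IsRelRigid R X ∧ ∀ Z : C, InPr R Z → IsRelRigid R (X ⊞ Z) → InAdd X Z

/-- `X` is indecomposable. -/
def Indecomp (X : C) : Prop :=
  ¬ IsZero X ∧ ∀ A B : C, Nonempty (X ≅ A ⊞ B) → IsZero A ∨ IsZero B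

/-- `f` is a decomposition of `X` into indecomposable objects. -/
def IsDecomp (X : C) {n : ℕ} (f : Fin n → C) : Prop :=
  (∀ i, Indecomp (f i)) ∧ Nonempty (X ≅ ⨁ f)

/-- `|X| = n`: `X` has exactly `n` pairwise non-isomorphic indecomposable direct summands. -/
def NumIndec (X : C) (n : ℕ) : Prop :=
  ∃ g : Fin n → C, (∀ i, Indecomp (g i)) ∧ (∀ i j : Fin n, Nonempty (g i ≅ g j) → i = j) ∧
    ∀ Y : C, Indecomp Y → (IsSummand Y X ↔ ∃ i : Fin n, Nonempty (Y ≅ g i))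

/-- `X` is basic: it decomposes into pairwise non-isomorphic indecomposable objects. -/
def IsBasic (X : C) : Prop :=
  ∃ (n : ℕ) (f : Fin n → C), IsDecomp X f ∧ ∀ i j : Fin n, Nonempty (f i ≅ f j) → i = j

/-- `Hom(R, Y)` is a left module over `End (op R)` (equivalently, a right module over the
endomorphism algebra `Γ = End R`), via precomposition. -/
instance homModule (R Y : C) : Module (End (op R)) (R ⟶ Y) where
  smul g f := g.unop ≫ f
  one_smul f := by show (1 : End (op R)).unop ≫ f = f; simp [End.one_def]
  mul_smul g h f := by
    show (g * h).unop ≫ f = g.unop ≫ h.unop ≫ f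
    simp [End.mul_def]
  smul_zero g := by show g.unop ≫ (0 : _ ⟶ _) = 0; simp
  smul_add g f₁ f₂ := by
    show g.unop ≫ (f₁ + f₂) = g.unop ≫ f₁ + g.unop ≫ f₂
    simp
  add_smul g h f := by
    show (g + h).unop ≫ f = g.unop ≫ f + h.unop ≫ f
    rw [show (g + h).unop = g.unop + h.unop from rfl, Preadditive.add_comp]
  zero_smul f := by show (0 : End (op R)).unop ≫ f = 0; simp

/-- Postcomposition `Hom(R, X) → Hom(R, Y)` with `φ : X ⟶ Y`, i.e. the action of the
functor `Hom(R, −)` on morphisms; it is linear over `End (op R)`. -/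
def homMap (R : C) {X Y : C} (φ : X ⟶ Y) : (R ⟶ X) →ₗ[End (op R)] (R ⟶ Y) where
  toFun u := u ≫ φ
  map_add' u v := by simp [Preadditive.add_comp]
  map_smul' g u := by
    show (g.unop ≫ u) ≫ φ = g.unop ≫ (u ≫ φ)
    simp [Category.assoc]

/-- `T` is a cluster tilting object:
`add T = {X : Hom(T, X[1]) = 0} = {X : Hom(X, T[1]) = 0}`. -/
def IsClusterTilting (T : C) : Prop :=
  (∀ X : C, InAdd T X ↔ ∀ f : T ⟶ X⟦(1 : ℤ)⟧, f = 0) ∧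
  (∀ X : C, InAdd T X ↔ ∀ f : X ⟶ T⟦(1 : ℤ)⟧, f = 0)

/-- `T` is maximal `R[1]`-rigid with respect to the whole category `C`. -/
def IsMaxRelRigidAll (R T : C) : Prop :=
  IsRelRigid R T ∧ ∀ Z : C, IsRelRigid R (T ⊞ Z) → InAdd T Z

/-- `T` is `R[1]`-cluster tilting: `T` is `R[1]`-rigid and `|T| = |R|`. -/
def IsRelClusterTilting (R T : C) : Prop :=
  IsRelRigid R T ∧ ∃ n : ℕ, NumIndec T n ∧ NumIndec R n

/-- `S` is presilting: `Hom(S, S[i]) = 0` for all `i > 0`. -/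
def IsPresilting (S : C) : Prop := ∀ i : ℤ, 0 < i → ∀ f : S ⟶ S⟦i⟧, f = 0

/-- A predicate on objects defines a thick subcategory: closed under isomorphisms,
shifts, extensions (cones) and direct summands. -/
def IsThickClosed (P : C → Prop) : Prop :=
  (∀ X Y : C, (X ≅ Y) → P X → P Y) ∧
  (∀ (X : C) (n : ℤ), P X → P (X⟦n⟧)) ∧
  (∀ T : Triangle C, T ∈ (distTriang C) → P T.obj₁ → P T.obj₂ → P T.obj₃) ∧
  (∀ X Y : C, IsSummand Y X → P X → P Y)

/-- The smallest thick subcategory of `C` containing `S` is `C` itself. -/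
def ThickGenerates (S : C) : Prop :=
  ∀ P : C → Prop, IsThickClosed P → P S → ∀ X : C, P X

/-- `S` is silting: presilting and `thick S = C`. -/
def IsSilting (S : C) : Prop := IsPresilting S ∧ ThickGenerates S

/-- `C` is `n`-Calabi–Yau: there are bifunctorial isomorphisms
`Hom(X, Y) ≅ D Hom(Y, X[n])`, encoded by a perfect pairing
`Hom(X, Y) × Hom(Y, X[n]) → k` which is natural in both variables. -/
def IsCalabiYau (n : ℤ) : Prop :=
  ∃ pair : ∀ X Y : C, (X ⟶ Y) →ₗ[k] ((Y ⟶ X⟦n⟧) →ₗ[k] k),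
    (∀ X Y : C, Function.Bijective (pair X Y)) ∧
    (∀ (X' X Y : C) (u : X' ⟶ X) (f : X ⟶ Y) (g : Y ⟶ X'⟦n⟧),
      pair X' Y (u ≫ f) g = pair X Y f (g ≫ (shiftFunctor C n).map u)) ∧
    (∀ (X Y Y' : C) (v : Y ⟶ Y') (f : X ⟶ Y) (g : Y' ⟶ X⟦n⟧),
      pair X Y' (f ≫ v) g = pair X Y f (v ≫ g))

/-- `T` is `d`-rigid: `Hom(T, T[i]) = 0` for `i = 1, …, d`. -/
def IsDRigid (d : ℤ) (T : C) : Prop := ∀ i : ℤ, 1 ≤ i → i ≤ d → ∀ f : T ⟶ T⟦i⟧, f = 0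

/-- `T` is maximal `d`-rigid. -/
def IsMaxDRigid (d : ℤ) (T : C) : Prop :=
  IsDRigid d T ∧ ∀ Z : C, IsDRigid d (T ⊞ Z) → InAdd T Z

/-- `T` is a `d`-cluster tilting object. -/
def IsDClusterTilting (d : ℤ) (T : C) : Prop :=
  IsDRigid d T ∧
  ∀ X : C, (∀ i : ℤ, 1 ≤ i → i ≤ d → ∀ f : T ⟶ X⟦i⟧, f = 0) → InAdd T X

/-- `X` is a maximal rigid object. -/
def IsMaxRigidObj (X : C) : Prop :=
  IsRigidObj X ∧ ∀ Z : C, IsRigidObj (X ⊞ Z) → InAdd X Z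

/-- The isomorphism setoid on objects of `C` satisfying a predicate `p`. -/
def objSetoid (p : C → Prop) : Setoid {X : C // p X} where
  r X Y := Nonempty (X.1 ≅ Y.1)
  iseqv := ⟨fun _ => ⟨Iso.refl _⟩, fun ⟨e⟩ => ⟨e.symm⟩, fun ⟨e⟩ ⟨f⟩ => ⟨e.trans f⟩⟩

section Modules

variable (Γ : Type w) [Ring Γ]

/-- `f, g` is a minimal projective presentation `P₁ → P₀ → M → 0`:
both `P`s are projective, the sequence is exact with `g` surjective, and the kernels of
`g` and `f` are superfluous submodules (which encodes minimality). -/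
def IsMinProjPres {P₁ P₀ M : Type w} [AddCommGroup P₁] [Module Γ P₁]
    [AddCommGroup P₀] [Module Γ P₀] [AddCommGroup M] [Module Γ M]
    (f : P₁ →ₗ[Γ] P₀) (g : P₀ →ₗ[Γ] M) : Prop :=
  Module.Projective Γ P₁ ∧ Module.Projective Γ P₀ ∧
  Function.Surjective g ∧ Function.Exact f g ∧
  (∀ K : Submodule Γ P₀, LinearMap.ker g ⊔ K = ⊤ → K = ⊤) ∧
  (∀ K : Submodule Γ P₁, LinearMap.ker f ⊔ K = ⊤ → K = ⊤)

/-- `M` is `τ`-rigid, via the Adachi–Iyama–Reiten criterion: for a minimal projective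
presentation `P₁ →f P₀ → M → 0`, the map `Hom(f, M) : Hom(P₀, M) → Hom(P₁, M)` is
surjective. -/
def IsTauRigid (M : Type w) [AddCommGroup M] [Module Γ M] : Prop :=
  ∀ (P₁ P₀ : Type w) [AddCommGroup P₁] [Module Γ P₁] [AddCommGroup P₀] [Module Γ P₀],
    ∀ (f : P₁ →ₗ[Γ] P₀) (g : P₀ →ₗ[Γ] M), IsMinProjPres Γ f g →
    Function.Surjective (fun h : P₀ →ₗ[Γ] M => h ∘ₗ f)

/-- `(M, P)` is a `τ`-rigid pair: `M ∈ mod Γ` is `τ`-rigid, `P` is finitely generated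
projective and `Hom(P, M) = 0`. -/
def IsTauRigidPair (M P : Type w) [AddCommGroup M] [Module Γ M]
    [AddCommGroup P] [Module Γ P] : Prop :=
  Module.Finite Γ M ∧ IsTauRigid Γ M ∧
  Module.Finite Γ P ∧ Module.Projective Γ P ∧ ∀ h : P →ₗ[Γ] M, h = 0

/-- A module is indecomposable. -/
def ModIndec (M : Type w) [AddCommGroup M] [Module Γ M] : Prop :=
  Nontrivial M ∧ ∀ A B : Submodule Γ M, IsCompl A B → A = ⊥ ∨ B = ⊥

/-- An internal decomposition into indecomposable submodules. -/
def IsModDecomp {M : Type w} [AddCommGroup M] [Module Γ M] {n : ℕ}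
    (f : Fin n → Submodule Γ M) : Prop :=
  DirectSum.IsInternal f ∧ ∀ i, ModIndec Γ (f i)

/-- `|M| = n`: `M` has exactly `n` non-isomorphic indecomposable direct summands. -/
def NumIndecMod (M : Type w) [AddCommGroup M] [Module Γ M] (n : ℕ) : Prop :=
  ∃ (m : ℕ) (f : Fin m → Submodule Γ M) (g : Fin n → Submodule Γ M),
    IsModDecomp Γ f ∧ (∀ i, ModIndec Γ (g i)) ∧
    (∀ i j : Fin n, Nonempty (g i ≃ₗ[Γ] g j) → i = j) ∧
    (∀ i : Fin m, ∃ j : Fin n, Nonempty (f i ≃ₗ[Γ] g j)) ∧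
    (∀ j : Fin n, ∃ i : Fin m, Nonempty (f i ≃ₗ[Γ] g j))

/-- `M` is basic: it decomposes into pairwise non-isomorphic indecomposable submodules. -/
def ModBasic (M : Type w) [AddCommGroup M] [Module Γ M] : Prop :=
  ∃ (n : ℕ) (f : Fin n → Submodule Γ M), IsModDecomp Γ f ∧
    ∀ i j : Fin n, Nonempty (f i ≃ₗ[Γ] f j) → i = j

/-- `(M, P)` is a support `τ`-tilting pair: a `τ`-rigid pair with `|M| + |P| = |Γ|`. -/
def IsSuppTauTiltingPair (M P : Type w) [AddCommGroup M] [Module Γ M]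
    [AddCommGroup P] [Module Γ P] : Prop :=
  IsTauRigidPair Γ M P ∧
  ∃ nM nP nΓ : ℕ, NumIndecMod Γ M nM ∧ NumIndecMod Γ P nP ∧ NumIndecMod Γ Γ nΓ ∧
    nM + nP = nΓ

/-- `M` is a support `τ`-tilting module. -/
def IsSuppTauTilting (M : Type w) [AddCommGroup M] [Module Γ M] : Prop :=
  ∃ P : ModuleCat.{w} Γ, ModBasic Γ P ∧ IsSuppTauTiltingPair Γ M P

/-- `M` has projective dimension at most `1`. -/
def PdLeOne (M : Type w) [AddCommGroup M] [Module Γ M] : Prop :=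
  ∃ (P₁ P₀ : ModuleCat.{w} Γ) (f : P₁ →ₗ[Γ] P₀) (g : ↥P₀ →ₗ[Γ] M),
    Module.Projective Γ P₁ ∧ Module.Projective Γ P₀ ∧
    Function.Injective f ∧ Function.Surjective g ∧ Function.Exact f g

/-- `Ext¹_Γ(M, M) = 0`: every self-extension of `M` splits. -/
def SelfExtSplit (M : Type w) [AddCommGroup M] [Module Γ M] : Prop :=
  ∀ (E : ModuleCat.{w} Γ) (i : M →ₗ[Γ] E) (p : ↥E →ₗ[Γ] M),
    Function.Injective i → Function.Surjective p → Function.Exact i p →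
    ∃ r : ↥E →ₗ[Γ] M, r ∘ₗ i = LinearMap.id

/-- `M` is a (basic) tilting module: `M ∈ mod Γ` is basic with `pd M ≤ 1`,
`Ext¹(M, M) = 0` and `|M| = |Γ|`. -/
def IsTiltingMod (M : Type w) [AddCommGroup M] [Module Γ M] : Prop :=
  Module.Finite Γ M ∧ ModBasic Γ M ∧ PdLeOne Γ M ∧ SelfExtSplit Γ M ∧
  ∃ n : ℕ, NumIndecMod Γ M n ∧ NumIndecMod Γ Γ n

/-- The linear-isomorphism setoid on modules satisfying a predicate `p`. -/
def modSetoid (p : ModuleCat.{w} Γ → Prop) : Setoid {M : ModuleCat.{w} Γ // p M} where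
  r M N := Nonempty (↥M.1 ≃ₗ[Γ] ↥N.1)
  iseqv := ⟨fun _ => ⟨LinearEquiv.refl Γ _⟩, fun ⟨e⟩ => ⟨e.symm⟩, fun ⟨e⟩ ⟨f⟩ => ⟨e.trans f⟩⟩

/-- The componentwise linear-isomorphism setoid on pairs of modules satisfying `p`. -/
def pairSetoid (p : ModuleCat.{w} Γ × ModuleCat.{w} Γ → Prop) :
    Setoid {Mp : ModuleCat.{w} Γ × ModuleCat.{w} Γ // p Mp} where
  r A B := Nonempty (↥A.1.1 ≃ₗ[Γ] ↥B.1.1) ∧ Nonempty (↥A.1.2 ≃ₗ[Γ] ↥B.1.2)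
  iseqv := ⟨fun _ => ⟨⟨LinearEquiv.refl Γ _⟩, ⟨LinearEquiv.refl Γ _⟩⟩,
    fun ⟨⟨e⟩, ⟨f⟩⟩ => ⟨⟨e.symm⟩, ⟨f.symm⟩⟩,
    fun ⟨⟨e⟩, ⟨f⟩⟩ ⟨⟨e'⟩, ⟨f'⟩⟩ => ⟨⟨e.trans e'⟩, ⟨f.trans f'⟩⟩⟩

/-- `(M, P)` is a basic `τ`-rigid pair. -/
def BasicTauRigidPair (Mp : ModuleCat.{w} Γ × ModuleCat.{w} Γ) : Prop :=
  IsTauRigidPair Γ ↥Mp.1 ↥Mp.2 ∧ ModBasic Γ ↥Mp.1 ∧ ModBasic Γ ↥Mp.2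

end Modules

section Aux

/-- Auxiliary: if all maps `R ⟶ R'` vanish, then all maps `A ⟶ B` vanish whenever
`A ∈ add R` and `B ∈ add R'`. -/
lemma aux_hom_zero_of_inAdd {R R' A B : C} (hz : ∀ u : R ⟶ R', u = 0)
    (hA : InAdd R A) (hB : InAdd R' B) (f : A ⟶ B) : f = 0 := by
  obtain ⟨n, sA, pA, hsA⟩ := hA
  obtain ⟨m, sB, pB, hsB⟩ := hB
  have hmid : pA ≫ f ≫ sB = 0 := by
    apply biproduct.hom_ext
    intro j
    apply biproduct.hom_ext'
    intro i
    trans (0 : R ⟶ R')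
    · exact hz _
    · simp
  calc f = (sA ≫ pA) ≫ f ≫ (sB ≫ pB) := by rw [hsA, hsB]; simp
    _ = sA ≫ (pA ≫ f ≫ sB) ≫ pB := by simp only [Category.assoc]
    _ = 0 := by rw [hmid]; simp

/-- Auxiliary: `add` is stable under shift. -/
lemma aux_inAdd_shift {R A : C} (n : ℤ) (hA : InAdd R A) : InAdd (R⟦n⟧) (A⟦n⟧) := by
  obtain ⟨m, s, p, hsp⟩ := hA
  let e := (shiftFunctor C n).mapBiproduct (fun _ : Fin m => R)
  refine ⟨m, (shiftFunctor C n).map s ≫ e.hom, e.inv ≫ (shiftFunctor C n).map p, ?_⟩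
  rw [Category.assoc, Iso.hom_inv_id_assoc, ← Functor.map_comp, hsp, CategoryTheory.Functor.map_id]

/-- Auxiliary: vanishing of Hom-groups is stable under shift. -/
lemma aux_shift_hom_zero {A B : C} (n : ℤ) (hz : ∀ u : A ⟶ B, u = 0)
    (f : A⟦n⟧ ⟶ B⟦n⟧) : f = 0 := by
  obtain ⟨g, rfl⟩ := (shiftFunctor C n).map_surjective f
  rw [hz g, Functor.map_zero]

/-- Auxiliary: vanishing of Hom-groups transfers along an isomorphism of the target. -/
lemma aux_zero_conj {A B B' : C} (eB : B ≅ B') (hz : ∀ u : A ⟶ B', u = 0)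
    (f : A ⟶ B) : f = 0 := by
  have h0 := hz (f ≫ eB.hom)
  calc f = (f ≫ eB.hom) ≫ eB.inv := by simp
    _ = 0 := by rw [h0]; simp

end Aux

/-- **Theorem 4.2.**  Let `d ≥ 1`, `C` a `(d+1)`-Calabi–Yau triangulated category, `R` a
basic `d`-rigid object and `X ∈ pr(R)`.  Then the following are equivalent:
`X` is `R[1]`-rigid; `X` is rigid; `X` is `d`-rigid. -/
theorem statement16 (d : ℤ) (hd : 1 ≤ d)
    (hCY : IsCalabiYau (k := k) (C := C) (d + 1))
    (R : C) (hRbasic : IsBasic R) (hR : IsDRigid d R) (X : C) (hX : InPr R X) :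
    (IsRelRigid R X ↔ IsRigidObj X) ∧ (IsRigidObj X ↔ IsDRigid d X) := by
  obtain ⟨pair, hbij, hnat₁, hnat₂⟩ := hCY
  obtain ⟨R₁, R₀, hR₁, hR₀, f, g, h, hT⟩ := hX
  -- vanishing of `Hom(A, B⟦i⟧)` for `A, B ∈ add R`, `1 ≤ i ≤ d`
  have V : ∀ (i : ℤ), 1 ≤ i → i ≤ d → ∀ {A B : C}, InAdd R A → InAdd R B →
      ∀ u : A ⟶ B⟦i⟧, u = 0 := fun i h1 h2 A B hA hB u =>
    aux_hom_zero_of_inAdd (fun v => hR i h1 h2 v) hA (aux_inAdd_shift i hB) u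
  -- vanishing of `Hom(X, Z)` from vanishing on `R₀` and `R₁⟦1⟧`
  have HX : ∀ Z : C, (∀ u : R₀ ⟶ Z, u = 0) → (∀ u : R₁⟦(1:ℤ)⟧ ⟶ Z, u = 0) →
      ∀ θ : X ⟶ Z, θ = 0 := by
    intro Z h0 h1 θ
    obtain ⟨u, hu⟩ := Triangle.yoneda_exact₃ _ hT θ (h0 (g ≫ θ))
    rw [hu, h1 u]; exact comp_zero
  have dirA : IsRelRigid R X → IsRigidObj X := by
    intro hrel α
    -- key vanishing for the Calabi–Yau pairing argument
    have key : ∀ ψ : (R₁⟦(1:ℤ)⟧)⟦(1:ℤ)⟧ ⟶ R₀⟦(d+1)⟧,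
        h⟦(1:ℤ)⟧' ≫ ψ ≫ g⟦(d+1)⟧' = 0 := by
      intro ψ
      by_cases hd2 : 2 ≤ d
      · have hψ : ψ = 0 := by
          refine aux_zero_conj
            (((shiftFunctorAdd' C d 1 (d+1) rfl).app R₀).trans
              ((shiftFunctor C (1:ℤ)).mapIso
                ((shiftFunctorAdd' C (d-1) 1 d (by omega)).app R₀))) ?_ ψ
          exact fun u => aux_shift_hom_zero 1
            (fun v => aux_shift_hom_zero 1
              (fun w => V (d-1) (by omega) (by omega) hR₁ hR₀ w) v) u
        rw [hψ, zero_comp, comp_zero]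
      · -- the case `d = 1`
        have e : shiftFunctor C (d+1) ≅
            shiftFunctor C (1:ℤ) ⋙ shiftFunctor C (1:ℤ) :=
          shiftFunctorAdd' C 1 1 (d+1) (by omega)
        obtain ⟨ρ, hρ⟩ := (shiftFunctor C (1:ℤ)).map_surjective (ψ ≫ e.hom.app R₀)
        have hψeq : ψ = ρ⟦(1:ℤ)⟧' ≫ e.inv.app R₀ := by
          rw [hρ, Category.assoc, Iso.hom_inv_id_app, Category.comp_id]
        have hγ0 : h ≫ ρ ≫ g⟦(1:ℤ)⟧' = 0 :=
          hrel _ ⟨_, aux_inAdd_shift 1 hR₀, h ≫ ρ, g⟦(1:ℤ)⟧', Category.assoc _ _ _⟩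
        calc h⟦(1:ℤ)⟧' ≫ ψ ≫ g⟦(d+1)⟧'
            = h⟦(1:ℤ)⟧' ≫ ρ⟦(1:ℤ)⟧' ≫ (e.inv.app R₀ ≫ (shiftFunctor C (d+1)).map g) := by
              rw [hψeq]; simp only [Category.assoc]
          _ = h⟦(1:ℤ)⟧' ≫ ρ⟦(1:ℤ)⟧' ≫
              ((shiftFunctor C (1:ℤ) ⋙ shiftFunctor C (1:ℤ)).map g ≫ e.inv.app X) := by
              rw [← e.inv.naturality g]
          _ = (shiftFunctor C (1:ℤ)).map (h ≫ ρ ≫ (shiftFunctor C (1:ℤ)).map g) ≫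
              e.inv.app X := by
              simp only [Functor.comp_map, Functor.map_comp, Category.assoc]
          _ = 0 := by rw [hγ0, Functor.map_zero, zero_comp]
    -- the pairing of `g ≫ α ≫ h⟦1⟧` with anything vanishes
    have hfun : pair R₀ ((R₁⟦(1:ℤ)⟧)⟦(1:ℤ)⟧) (g ≫ (α ≫ h⟦(1:ℤ)⟧')) = 0 := by
      apply LinearMap.ext
      intro ψ
      rw [LinearMap.zero_apply]
      rw [hnat₁ R₀ X ((R₁⟦(1:ℤ)⟧)⟦(1:ℤ)⟧) g (α ≫ h⟦(1:ℤ)⟧') ψ]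
      rw [hnat₂ X (X⟦(1:ℤ)⟧) ((R₁⟦(1:ℤ)⟧)⟦(1:ℤ)⟧) (h⟦(1:ℤ)⟧') α
        (ψ ≫ (shiftFunctor C (d+1)).map g)]
      rw [key ψ]
      exact map_zero _
    have hgθ : g ≫ (α ≫ h⟦(1:ℤ)⟧') = 0 :=
      (hbij R₀ ((R₁⟦(1:ℤ)⟧)⟦(1:ℤ)⟧)).injective (by rw [hfun, map_zero])
    -- hence `α ≫ h⟦1⟧ = 0`
    have hθ : α ≫ h⟦(1:ℤ)⟧' = 0 := by
      obtain ⟨u, hu⟩ := Triangle.yoneda_exact₃ _ hT (α ≫ h⟦(1:ℤ)⟧') hgθ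
      exact hu.trans (by rw [aux_shift_hom_zero 1 (fun v => V 1 le_rfl hd hR₁ hR₁ v) u]; exact comp_zero)
    -- so `α` factors through `add R⟦1⟧` and vanishes
    have hT3 := rot_of_distTriang _ (rot_of_distTriang _ (rot_of_distTriang _ hT))
    obtain ⟨β, hβ⟩ := Triangle.coyoneda_exact₃ _ hT3 α
      (by
        show α ≫ (-(h⟦(1:ℤ)⟧')) = 0
        rw [Preadditive.comp_neg, hθ, neg_zero])
    exact hrel α ⟨_, aux_inAdd_shift 1 hR₀, β,
      ((Triangle.mk f g h).rotate.rotate.rotate).mor₂, hβ.symm⟩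
  have dirB : IsRigidObj X → IsDRigid d X := by
    intro hrig i h1 hi φ
    by_cases hi1 : i = 1
    · subst hi1; exact hrig φ
    by_cases hid : i = d
    · -- `i = d`: use the Calabi–Yau pairing
      have hz : ∀ β : X⟦i⟧ ⟶ X⟦(d+1)⟧, β = 0 := by
        intro β
        refine aux_zero_conj ((shiftFunctorAdd' C 1 i (d+1) (by omega)).app X) ?_ β
        exact fun u => aux_shift_hom_zero i (fun v => hrig v) u
      have hfun : pair X (X⟦i⟧) φ = 0 := by
        apply LinearMap.ext
        intro β
        rw [LinearMap.zero_apply, hz β, map_zero]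
      exact (hbij X (X⟦i⟧)).injective (by rw [hfun, map_zero])
    · -- `2 ≤ i ≤ d - 1`
      have hz3 : ∀ u : X ⟶ (R₁⟦i⟧)⟦(1:ℤ)⟧, u = 0 := by
        apply HX
        · intro u
          refine aux_zero_conj ((shiftFunctorAdd' C i 1 (i+1) rfl).app R₁).symm ?_ u
          exact fun v => V (i+1) (by omega) (by omega) hR₀ hR₁ v
        · exact fun u => aux_shift_hom_zero 1
            (fun v => V i (by omega) hi hR₁ hR₁ v) u
      have hz2 : ∀ u : X ⟶ R₀⟦i⟧, u = 0 := by
        apply HX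
        · exact fun u => V i (by omega) hi hR₀ hR₀ u
        · intro u
          refine aux_zero_conj ((shiftFunctorAdd' C (i-1) 1 i (by omega)).app R₀) ?_ u
          exact fun v => aux_shift_hom_zero 1
            (fun w => V (i-1) (by omega) (by omega) hR₁ hR₀ w) v
      have hTi := Triangle.shift_distinguished (Triangle.mk f g h) hT i
      obtain ⟨ψ, hψ⟩ := Triangle.coyoneda_exact₃ _ hTi φ (hz3 _)
      rw [hψ, hz2 ψ]; exact zero_comp
  refine ⟨⟨dirA, fun hrig φ _ => hrig φ⟩, ⟨dirB, fun hD φ => hD 1 le_rfl hd φ⟩⟩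

end RelRigid
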